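/- Let a, b, c ∈ ℂ and let ζ := exp(iπ/3). On each ordered side erect the equilateral triangle with third vertex obtained by rotating one endpoint about the other by 60°, and let n_a := (b + c + (c + ζ(b − c)))/3, n_b := (c + a + (a + ζ(c − a)))/3, and n_c := (a + b + (b + ζ(a − b)))/3 be the centroids of the three erected equilateral triangles. Then the triangle with vertices n_a, n_b, n_c is equilateral, i.e., |n_a − n_b| = |n_b − n_c| = |n_c − n_a|, and its centroid coincides with the centroid of the original triangle: (n_a + n_b + n_c)/3 = (a + b + c)/3. -/

import Mathlib

/-- the outer Napoleon triangle of any triangle in the complex plane is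
equilateral, and its centroid coincides with the centroid of the original triangle. -/
theorem napoleon_triangle (a b c : ℂ) :
    (‖((b + c + (c + Complex.exp (Complex.I * (Real.pi / 3)) * (b - c))) / 3 -
        (c + a + (a + Complex.exp (Complex.I * (Real.pi / 3)) * (c - a))) / 3)‖ =
      ‖((c + a + (a + Complex.exp (Complex.I * (Real.pi / 3)) * (c - a))) / 3 -
        (a + b + (b + Complex.exp (Complex.I * (Real.pi / 3)) * (a - b))) / 3)‖ ∧
    ‖((c + a + (a + Complex.exp (Complex.I * (Real.pi / 3)) * (c - a))) / 3 -
        (a + b + (b + Complex.exp (Complex.I * (Real.pi / 3)) * (a - b))) / 3)‖ =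
      ‖((a + b + (b + Complex.exp (Complex.I * (Real.pi / 3)) * (a - b))) / 3 -
        (b + c + (c + Complex.exp (Complex.I * (Real.pi / 3)) * (b - c))) / 3)‖) ∧
    ((b + c + (c + Complex.exp (Complex.I * (Real.pi / 3)) * (b - c))) / 3 +
        (c + a + (a + Complex.exp (Complex.I * (Real.pi / 3)) * (c - a))) / 3 +
        (a + b + (b + Complex.exp (Complex.I * (Real.pi / 3)) * (a - b))) / 3) / 3 =
      (a + b + c) / 3 := by
  set z : ℂ := Complex.exp (Complex.I * (Real.pi / 3)) with hz
  have hzval : z = (1/2 : ℂ) + (Real.sqrt 3 / 2) * Complex.I := by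
    rw [hz, show Complex.I * ((Real.pi : ℂ) / 3) = ((Real.pi/3 : ℝ) : ℂ) * Complex.I by
        push_cast; ring,
      Complex.exp_mul_I, ← Complex.ofReal_cos, ← Complex.ofReal_sin,
      Real.cos_pi_div_three, Real.sin_pi_div_three]
    push_cast; ring
  have hsq : z ^ 2 = z - 1 := by
    rw [hzval]
    have h3 : ((Real.sqrt 3 : ℂ)) ^ 2 = 3 := by
      rw [← Complex.ofReal_pow, Real.sq_sqrt (by norm_num : (3:ℝ) ≥ 0)]
      norm_num
    have hI : Complex.I ^ 2 = -1 := Complex.I_sq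
    linear_combination (Complex.I^2/4) * h3 + (3/4 : ℂ) * hI
  have habs : ‖z‖ = 1 := by
    rw [hz, Complex.norm_exp]
    simp
  refine ⟨⟨?_, ?_⟩, by ring⟩
  · rw [show (b + c + (c + z * (b - c))) / 3 - (c + a + (a + z * (c - a))) / 3
        = (-z) * ((c + a + (a + z * (c - a))) / 3 - (a + b + (b + z * (a - b))) / 3) by
      linear_combination ((b + c - 2*a)/3) * hsq]
    rw [norm_mul, norm_neg, habs, one_mul]
  · rw [show (c + a + (a + z * (c - a))) / 3 - (a + b + (b + z * (a - b))) / 3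
        = (-z) * ((a + b + (b + z * (a - b))) / 3 - (b + c + (c + z * (b - c))) / 3) by
      linear_combination ((c + a - 2*b)/3) * hsq]
    rw [norm_mul, norm_neg, habs, one_mul]
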